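/- Fix c > 0 and define v(s) = log(c/(e^{cs} − 1)) and u(s) = −(1/c)(s + e^{−cs}/c) for s > 0. Then the curve γ(s) = ((u − v)/2, (u + v)/2) is unit-speed spacelike in L² and its curvature κ = ẍẏ − ẋÿ equals e^{v(s)} = c/(e^{cs} − 1) for all s > 0. -/

import Mathlib

/-- for c > 0, with v(s) = log(c/(e^{cs}-1)) and
u(s) = -(1/c)(s + e^{-cs}/c), the curve γ = ((u-v)/2, (u+v)/2) is unit-speed
spacelike and its curvature equals e^{v(s)} = c/(e^{cs}-1). -/
theorem stmt_16 (c : ℝ) (hc : 0 < c) (u v x y : ℝ → ℝ)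
    (hv : v = fun s => Real.log (c / (Real.exp (c * s) - 1)))
    (hu : u = fun s => -(1 / c) * (s + Real.exp (-(c * s)) / c))
    (hx : x = fun s => (u s - v s) / 2)
    (hy : y = fun s => (u s + v s) / 2) :
    ∀ s, 0 < s →
      (-(deriv x s) ^ 2 + (deriv y s) ^ 2 = 1) ∧
      (deriv (deriv x) s * deriv y s - deriv x s * deriv (deriv y) s
        = c / (Real.exp (c * s) - 1)) ∧
      (deriv (deriv x) s * deriv y s - deriv x s * deriv (deriv y) s
        = Real.exp (v s)) := by
  have hDpos : ∀ t : ℝ, 0 < t → 0 < Real.exp (c * t) - 1 := by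
    intro t ht
    have : (1 : ℝ) < Real.exp (c * t) := by
      have : 0 < c * t := by positivity
      simpa using Real.exp_lt_exp.2 this
    linarith
  -- first derivative of u
  have hu' : ∀ t : ℝ, HasDerivAt u (-(1 / c) * (1 - Real.exp (-(c * t)))) t := by
    intro t
    rw [hu]
    have h1 : HasDerivAt (fun s : ℝ => c * s) c t := by
      simpa using (hasDerivAt_id t).const_mul c
    have h2 : HasDerivAt (fun s : ℝ => Real.exp (-(c * s))) (Real.exp (-(c * t)) * (-c)) t :=
      h1.neg.exp
    have h3 := ((hasDerivAt_id t).add (h2.div_const c)).const_mul (-(1 / c))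
    refine h3.congr_deriv ?_
    field_simp
    ring
  -- first derivative of v
  have hv' : ∀ t : ℝ, 0 < t →
      HasDerivAt v (-(c * Real.exp (c * t) / (Real.exp (c * t) - 1))) t := by
    intro t ht
    have hD := hDpos t ht
    have hDne : Real.exp (c * t) - 1 ≠ 0 := ne_of_gt hD
    rw [hv]
    have h1 : HasDerivAt (fun s : ℝ => c * s) c t := by
      simpa using (hasDerivAt_id t).const_mul c
    have h2 : HasDerivAt (fun s : ℝ => Real.exp (c * s) - 1) (Real.exp (c * t) * c) t :=
      h1.exp.sub_const 1
    have h4 := (hasDerivAt_const t c).div h2 hDne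
    have h5 := h4.log (by simp only [Pi.div_apply]; exact div_ne_zero hc.ne' hDne)
    refine h5.congr_deriv ?_
    simp only [Pi.div_apply]
    field_simp
    ring
  -- second derivative building blocks
  have hu'' : ∀ t : ℝ, HasDerivAt (fun t => -(1 / c) * (1 - Real.exp (-(c * t))))
      (-Real.exp (-(c * t))) t := by
    intro t
    have h1 : HasDerivAt (fun s : ℝ => c * s) c t := by
      simpa using (hasDerivAt_id t).const_mul c
    have h2 : HasDerivAt (fun s : ℝ => Real.exp (-(c * s))) (Real.exp (-(c * t)) * (-c)) t :=
      h1.neg.exp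
    have h3 := ((hasDerivAt_const t (1:ℝ)).sub h2).const_mul (-(1 / c))
    refine h3.congr_deriv ?_
    field_simp
    ring
  have hv'' : ∀ t : ℝ, 0 < t →
      HasDerivAt (fun t => -(c * Real.exp (c * t) / (Real.exp (c * t) - 1)))
        (c ^ 2 * Real.exp (c * t) / (Real.exp (c * t) - 1) ^ 2) t := by
    intro t ht
    have hD := hDpos t ht
    have hDne : Real.exp (c * t) - 1 ≠ 0 := ne_of_gt hD
    have h1 : HasDerivAt (fun s : ℝ => c * s) c t := by
      simpa using (hasDerivAt_id t).const_mul c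
    have h2 : HasDerivAt (fun s : ℝ => Real.exp (c * s) - 1) (Real.exp (c * t) * c) t :=
      h1.exp.sub_const 1
    have hnum : HasDerivAt (fun s : ℝ => c * Real.exp (c * s)) (c * (Real.exp (c * t) * c)) t :=
      h1.exp.const_mul c
    have h3 := (hnum.div h2 hDne).neg
    refine h3.congr_deriv ?_
    field_simp
    ring
  -- first derivatives of x and y
  have hx' : ∀ t : ℝ, 0 < t → HasDerivAt x
      ((-(1 / c) * (1 - Real.exp (-(c * t))) -
        -(c * Real.exp (c * t) / (Real.exp (c * t) - 1))) / 2) t := by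
    intro t ht
    rw [hx]
    exact ((hu' t).sub (hv' t ht)).div_const 2
  have hy' : ∀ t : ℝ, 0 < t → HasDerivAt y
      ((-(1 / c) * (1 - Real.exp (-(c * t))) +
        -(c * Real.exp (c * t) / (Real.exp (c * t) - 1))) / 2) t := by
    intro t ht
    rw [hy]
    exact ((hu' t).add (hv' t ht)).div_const 2
  intro s hs
  have hD := hDpos s hs
  have hDne : Real.exp (c * s) - 1 ≠ 0 := ne_of_gt hD
  have hEne : Real.exp (c * s) ≠ 0 := (Real.exp_pos _).ne'
  have hcne : c ≠ 0 := ne_of_gt hc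
  -- deriv x, deriv y at s
  have hdx : deriv x s = (-(1 / c) * (1 - Real.exp (-(c * s))) -
      -(c * Real.exp (c * s) / (Real.exp (c * s) - 1))) / 2 := (hx' s hs).deriv
  have hdy : deriv y s = (-(1 / c) * (1 - Real.exp (-(c * s))) +
      -(c * Real.exp (c * s) / (Real.exp (c * s) - 1))) / 2 := (hy' s hs).deriv
  -- second derivatives
  have hevx : deriv x =ᶠ[nhds s] fun t => (-(1 / c) * (1 - Real.exp (-(c * t))) -
      -(c * Real.exp (c * t) / (Real.exp (c * t) - 1))) / 2 :=
    Filter.eventuallyEq_of_mem (Ioi_mem_nhds hs) (fun t ht => (hx' t ht).deriv)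
  have hevy : deriv y =ᶠ[nhds s] fun t => (-(1 / c) * (1 - Real.exp (-(c * t))) +
      -(c * Real.exp (c * t) / (Real.exp (c * t) - 1))) / 2 :=
    Filter.eventuallyEq_of_mem (Ioi_mem_nhds hs) (fun t ht => (hy' t ht).deriv)
  have hddx : deriv (deriv x) s = (-Real.exp (-(c * s)) -
      c ^ 2 * Real.exp (c * s) / (Real.exp (c * s) - 1) ^ 2) / 2 := by
    rw [hevx.deriv_eq]
    exact (((hu'' s).sub (hv'' s hs)).div_const 2).deriv
  have hddy : deriv (deriv y) s = (-Real.exp (-(c * s)) +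
      c ^ 2 * Real.exp (c * s) / (Real.exp (c * s) - 1) ^ 2) / 2 := by
    rw [hevy.deriv_eq]
    exact (((hu'' s).add (hv'' s hs)).div_const 2).deriv
  have hexp : Real.exp (-(c * s)) = (Real.exp (c * s))⁻¹ := Real.exp_neg _
  refine ⟨?_, ?_, ?_⟩
  · rw [hdx, hdy, hexp]
    field_simp
    ring
  · rw [hdx, hdy, hddx, hddy, hexp]
    field_simp
    ring
  · rw [hdx, hdy, hddx, hddy, hexp, hv]
    simp only
    rw [Real.exp_log (by positivity)]
    field_simp
    ring
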